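/- arXiv:2211.00215 — 8 statements merged into one kernel-verified Lean document; each statement's English description precedes it below -/
import Mathlib

section
/- Let G be a group, let K ⊆ G be a finite subset with e ∈ K, and let F₀, F₁ ⊆ G be finite subsets. Then |KF₁ \ F₁| ≤ |KF₀ \ F₀| + |K| · |F₀ △ F₁|. -/
open Pointwise

/-!
Each `k * f ∈ K * F₁ \ F₁` lies in `K * (F₁ \ F₀)` if `f ∉ F₀`, and otherwise in
`K * F₀ \ F₀` or in `F₀ \ F₁` according as `k * f ∉ F₀` or not.
Counting the three pieces gives the bound, since
`#(F₀ \ F₁) ≤ #K * #(F₀ \ F₁)` once `K` is nonempty.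
-/

namespace Finset

variable {α : Type*} [DecidableEq α]

theorem card_symmDiff (s t : Finset α) : #(symmDiff s t) = #(s \ t) + #(t \ s) := by
  rw [symmDiff_def, sup_eq_union, card_union_of_disjoint disjoint_sdiff_sdiff]

variable [Mul α]

theorem mul_sdiff_subset_union (K F₀ F₁ : Finset α) :
    (K * F₁) \ F₁ ⊆ ((K * F₀) \ F₀) ∪ (F₀ \ F₁) ∪ K * (F₁ \ F₀) := by
  intro x hx
  obtain ⟨hx₁, hx₁'⟩ := mem_sdiff.1 hx
  obtain ⟨k, hk, f, hf, rfl⟩ := mem_mul.1 hx₁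
  simp only [mem_union, mem_sdiff]
  by_cases hf₀ : f ∈ F₀
  · by_cases hkf₀ : k * f ∈ F₀
    · exact .inl (.inr ⟨hkf₀, hx₁'⟩)
    · exact .inl (.inl ⟨mul_mem_mul hk hf₀, hkf₀⟩)
  · exact .inr (mul_mem_mul hk (mem_sdiff.2 ⟨hf, hf₀⟩))

theorem card_mul_sdiff_le_add (K F₀ F₁ : Finset α) :
    #((K * F₁) \ F₁) ≤ #((K * F₀) \ F₀) + #(F₀ \ F₁) + #K * #(F₁ \ F₀) :=
  calc #((K * F₁) \ F₁)
      ≤ #(((K * F₀) \ F₀) ∪ (F₀ \ F₁) ∪ K * (F₁ \ F₀)) :=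
        card_le_card (mul_sdiff_subset_union ..)
    _ ≤ #((K * F₀) \ F₀) + #(F₀ \ F₁) + #(K * (F₁ \ F₀)) := by
      grw [card_union_le, card_union_le]
    _ ≤ #((K * F₀) \ F₀) + #(F₀ \ F₁) + #K * #(F₁ \ F₀) := by grw [card_mul_le]

end Finset

theorem card_mul_sdiff_le_general {G : Type*} [Group G] [DecidableEq G]
    (K F₀ F₁ : Finset G) :
    ((K * F₁) \ F₁).card ≤ ((K * F₀) \ F₀).card + K.card * (symmDiff F₀ F₁).card := by
  obtain rfl | hK := K.eq_empty_or_nonempty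
  · simp
  calc ((K * F₁) \ F₁).card
      ≤ ((K * F₀) \ F₀).card + (F₀ \ F₁).card + K.card * (F₁ \ F₀).card :=
        Finset.card_mul_sdiff_le_add K F₀ F₁
    _ ≤ ((K * F₀) \ F₀).card + K.card * (F₀ \ F₁).card + K.card * (F₁ \ F₀).card := by
        grw [← Nat.le_mul_of_pos_left (F₀ \ F₁).card hK.card_pos]
    _ = ((K * F₀) \ F₀).card + K.card * (symmDiff F₀ F₁).card := by
        rw [Finset.card_symmDiff]; ring

/-- Let `G` be a group, `K ⊆ G` finite with `e ∈ K`, and `F₀, F₁ ⊆ G` finite.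
Then `|KF₁ \ F₁| ≤ |KF₀ \ F₀| + |K| · |F₀ △ F₁|`. -/
theorem card_mul_sdiff_le {G : Type*} [Group G] [DecidableEq G]
    (K F₀ F₁ : Finset G) (hK : (1 : G) ∈ K) :
    ((K * F₁) \ F₁).card ≤ ((K * F₀) \ F₀).card + K.card * (symmDiff F₀ F₁).card :=
  card_mul_sdiff_le_general K F₀ F₁
end

section
/- Let G be a group and let F, K ⊆ G be finite subsets. Then |∂_K F| ≤ |K| · |KF △ F|. -/
open Pointwise

/-- The `K`-boundary of a finite subset `F` of a group: `∂_K F = {f ∈ F : Kf ⊄ F}`. -/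
def Finset.groupBoundary {G : Type*} [Group G] [DecidableEq G] (K F : Finset G) : Finset G :=
  F.filter fun f => ¬ ∀ k ∈ K, k * f ∈ F

namespace Finset

variable {G : Type*} [Group G] [DecidableEq G]

theorem groupBoundary_subset_inv_mul_sdiff (K F : Finset G) :
    groupBoundary K F ⊆ K⁻¹ * ((K * F) \ F) := by
  intro f hf
  simp only [groupBoundary, mem_filter, not_forall] at hf
  obtain ⟨hfF, k, hk, hkf⟩ := hf
  have hmem : k * f ∈ (K * F) \ F := mem_sdiff.2 ⟨mul_mem_mul hk hfF, hkf⟩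
  simpa using mul_mem_mul (inv_mem_inv hk) hmem

end Finset

/-- Let `G` be a group and `F, K ⊆ G` finite subsets.
Then `|∂_K F| ≤ |K| · |KF △ F|`. -/
theorem card_groupBoundary_le {G : Type*} [Group G] [DecidableEq G] (F K : Finset G) :
    (Finset.groupBoundary K F).card ≤ K.card * (symmDiff (K * F) F).card := by
  calc (Finset.groupBoundary K F).card
      ≤ (K⁻¹ * ((K * F) \ F)).card :=
        Finset.card_le_card (Finset.groupBoundary_subset_inv_mul_sdiff K F)
    _ ≤ K⁻¹.card * ((K * F) \ F).card := Finset.card_mul_le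
    _ ≤ K.card * (symmDiff (K * F) F).card := by
        rw [Finset.card_inv]
        exact Nat.mul_le_mul_left _ (Finset.card_le_card (symmDiff_def (K * F) F ▸ le_sup_left))
end

section
/- Let G be a group, let M, L ⊆ G be finite subsets with e ∈ M ⊆ L, let F ⊆ G be a nonempty finite subset, and let C ⊆ G be an L-separated subset. Then |F ∩ MC| / |F| ≤ |M|/|L| + |M| · |∂_L F| / |F| + |M| · |M⁻¹F \ F| / |F|. -/
open Pointwise

/-- A subset `C ⊆ G` is `L`-separated if the translates `Lc`, `c ∈ C`, are pairwise disjoint. -/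
def LSeparated {G : Type*} [Group G] (L : Finset G) (C : Set G) : Prop :=
  ∀ c₁ ∈ C, ∀ c₂ ∈ C, c₁ ≠ c₂ → ((L : Set G) * {c₁}) ∩ ((L : Set G) * {c₂}) = ∅

/-!
Only the points `c ∈ C` whose translate `Mc` meets `F` matter: they lie in `M⁻¹F`, and their
`M`-translates cover `F ∩ MC`, so `|F ∩ MC| ≤ |M|·#{such c}`. Those with `Lc ⊆ F` give pairwise
disjoint translates `Lc` inside `F` by separation, so there are at most `|F|/|L|` of them; each
of the others lies in `∂_L F` if it belongs to `F`, and in `M⁻¹F \ F` otherwise.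
-/

open Finset

section
variable {G : Type*} [Group G] [DecidableEq G]

theorem LSeparated.card_mul {L : Finset G} {C : Set G} (hC : LSeparated L C) {D : Finset G}
    (hD : (D : Set G) ⊆ C) : #(L * D) = #L * #D := by
  refine card_mul_iff.2 ?_
  rintro ⟨k₁, c₁⟩ h₁ ⟨k₂, c₂⟩ h₂ (heq : k₁ * c₁ = k₂ * c₂)
  simp only [Set.mem_prod, mem_coe] at h₁ h₂
  obtain rfl : c₁ = c₂ := by
    by_contra hne
    have hmem : k₁ * c₁ ∈ ((L : Set G) * {c₁}) ∩ ((L : Set G) * {c₂}) :=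
      ⟨Set.mul_mem_mul h₁.1 rfl, heq ▸ Set.mul_mem_mul h₂.1 rfl⟩
    rw [hC c₁ (hD h₁.2) c₂ (hD h₂.2) hne] at hmem
    exact hmem
  rw [mul_right_cancel heq]

theorem ncard_inter_mul_le_card_mul_card_filter (M F : Finset G) (C : Set G)
    [DecidablePred (· ∈ C)] :
    ((F : Set G) ∩ (M * C)).ncard ≤ #M * #((M⁻¹ * F).filter (· ∈ C)) := by
  have hsub : (F : Set G) ∩ (M * C) ⊆ ↑(M * (M⁻¹ * F).filter (· ∈ C)) := by
    rintro _ ⟨hF, m, hm, c, hc, rfl⟩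
    have hcMF : c ∈ M⁻¹ * F := by
      simpa using mul_mem_mul (inv_mem_inv hm) hF
    exact_mod_cast mul_mem_mul hm (mem_filter.2 ⟨hcMF, hc⟩)
  calc _ ≤ (↑(M * (M⁻¹ * F).filter (· ∈ C)) : Set G).ncard :=
        Set.ncard_le_ncard hsub (finite_toSet _)
    _ ≤ _ := (Set.ncard_coe_finset _).trans_le card_mul_le

theorem Finset.subset_filter_union_groupBoundary_union_sdiff (K S F : Finset G) :
    S ⊆ S.filter (fun c => ∀ k ∈ K, k * c ∈ F) ∪ groupBoundary K F ∪ (S \ F) := by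
  intro c hc
  by_cases hKc : ∀ k ∈ K, k * c ∈ F
  · exact mem_union_left _ (mem_union_left _ (mem_filter.2 ⟨hc, hKc⟩))
  by_cases hcF : c ∈ F
  · exact mem_union_left _ (mem_union_right _ (mem_filter.2 ⟨hcF, hKc⟩))
  · exact mem_union_right _ (mem_sdiff.2 ⟨hc, hcF⟩)

theorem LSeparated.card_mul_card_filter_le {L : Finset G} {C : Set G} (hC : LSeparated L C)
    (S F : Finset G) [DecidablePred (· ∈ C)] :
    #L * #(S.filter (· ∈ C)) ≤ #F + #L * (#(groupBoundary L F) + #(S \ F)) := by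
  set D := S.filter (· ∈ C)
  set D₁ := D.filter (fun c => ∀ k ∈ L, k * c ∈ F)
  have hD₁ : #L * #D₁ ≤ #F := by
    rw [← hC.card_mul fun c hc => (mem_filter.1 (mem_filter.1 hc).1).2]
    refine card_le_card fun x hx => ?_
    obtain ⟨k, hk, c, hc, rfl⟩ := mem_mul.1 hx
    exact (mem_filter.1 hc).2 k hk
  have hDF : D \ F ⊆ S \ F := sdiff_subset_sdiff (filter_subset _ _) le_rfl
  have hD : #D ≤ #D₁ + (#(groupBoundary L F) + #(S \ F)) :=
    calc #D ≤ #(D₁ ∪ groupBoundary L F ∪ (D \ F)) :=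
          card_le_card (subset_filter_union_groupBoundary_union_sdiff L D F)
      _ ≤ #D₁ + #(groupBoundary L F) + #(D \ F) :=
          (card_union_le _ _).trans (Nat.add_le_add_right (card_union_le _ _) _)
      _ ≤ _ := by have := card_le_card hDF; omega
  calc #L * #D ≤ #L * #D₁ + #L * (#(groupBoundary L F) + #(S \ F)) := by
        rw [← Nat.mul_add]; exact Nat.mul_le_mul_left _ hD
    _ ≤ _ := Nat.add_le_add_right hD₁ _

end

/-- Let `M, L ⊆ G` be finite with `e ∈ M ⊆ L`, `F` a nonempty finite subset,
and `C` an `L`-separated subset. Then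
`|F ∩ MC|/|F| ≤ |M|/|L| + |M|·|∂_L F|/|F| + |M|·|M⁻¹F \ F|/|F|`. -/
theorem density_inter_translates_le {G : Type*} [Group G] [DecidableEq G]
    (M L : Finset G) (hM : (1 : G) ∈ M) (hML : M ⊆ L)
    (F : Finset G) (hF : F.Nonempty) (C : Set G) (hC : LSeparated L C) :
    (((F : Set G) ∩ ((M : Set G) * C)).ncard : ℝ) / F.card ≤
      (M.card : ℝ) / L.card
        + (M.card : ℝ) * ((Finset.groupBoundary L F).card : ℝ) / F.card
        + (M.card : ℝ) * (((M⁻¹ * F) \ F).card : ℝ) / F.card := by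
  classical
  set D := (M⁻¹ * F).filter (· ∈ C)
  have hcover : (((F : Set G) ∩ (M * C)).ncard : ℝ) ≤ #M * #D := by
    exact_mod_cast ncard_inter_mul_le_card_mul_card_filter M F C
  have hcount : ((#L * #D : ℕ) : ℝ) ≤ (#F + #L * (#(groupBoundary L F) + #((M⁻¹ * F) \ F)) : ℕ) :=
    Nat.cast_le.2 (hC.card_mul_card_filter_le (M⁻¹ * F) F)
  push_cast at hcount
  have hL : (0 : ℝ) < #L := by exact_mod_cast card_pos.2 ⟨1, hML hM⟩
  have hD : (#D : ℝ) ≤ #F / #L + (#(groupBoundary L F) + #((M⁻¹ * F) \ F)) := by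
    rw [← sub_le_iff_le_add, le_div_iff₀ hL]
    linarith
  calc (((F : Set G) ∩ ((M : Set G) * C)).ncard : ℝ) / #F
      ≤ #M * #D / #F := by gcongr
    _ ≤ #M * (#F / #L + (#(groupBoundary L F) + #((M⁻¹ * F) \ F))) / #F := by gcongr
    _ = _ := by
      have hF' : (#F : ℝ) ≠ 0 := by exact_mod_cast hF.card_pos.ne'
      field_simp
      ring
end

section
/- Let G be a countable group with a Følner sequence (Fₙ) of nonempty finite subsets, let M, L ⊆ G be finite subsets with e ∈ M ⊆ L, and let C ⊆ G be an L-separated subset. Then the upper Banach density of MC satisfies D̄(MC) ≤ |M|/|L|. -/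
open Pointwise

/-- A Følner sequence: a sequence of nonempty finite subsets `Fₙ` of `G` such that
`|KFₙ △ Fₙ|/|Fₙ| → 0` for every nonempty finite `K ⊆ G`. -/
def IsFolnerSeq {G : Type*} [Group G] [DecidableEq G] (Fol : ℕ → Finset G) : Prop :=
  (∀ n, (Fol n).Nonempty) ∧
    ∀ K : Finset G, K.Nonempty →
      Filter.Tendsto (fun n => ((symmDiff (K * Fol n) (Fol n)).card : ℝ) / (Fol n).card)
        Filter.atTop (nhds 0)

/-- The upper Banach density of `C ⊆ G` with respect to a Følner sequence:
`D̄(C) = liminf_n sup_{g ∈ G} |Fₙ ∩ Cg| / |Fₙ|`. -/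
noncomputable def upperBanachDensity {G : Type*} [Group G] (Fol : ℕ → Finset G) (C : Set G) : ℝ :=
  Filter.liminf
    (fun n => ⨆ g : G, (((Fol n : Set G) ∩ (C * {g})).ncard : ℝ) / (Fol n).card)
    Filter.atTop

lemma core_count {G : Type*} [Group G] [DecidableEq G] (F M L : Finset G) (hML : M ⊆ L)
    (C : Set G) (hC : LSeparated L C) (g : G) :
    ((F : Set G) ∩ ((M : Set G) * C * {g})).ncard * L.card ≤ M.card * (L * M⁻¹ * F).card := by
  classical
  set P : G → Prop := fun x => ∃ c ∈ C, ∃ m ∈ M, m * c * g = x with hP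
  set T : Finset G := F.filter P with hT
  have hST : (F : Set G) ∩ ((M : Set G) * C * {g}) = (T : Set G) := by
    ext x
    simp only [hT, Finset.coe_filter, Set.mem_inter_iff, Finset.mem_coe, Set.mem_setOf_eq, hP]
    constructor
    · rintro ⟨hxF, hx⟩
      refine ⟨hxF, ?_⟩
      rw [Set.mem_mul] at hx
      obtain ⟨y, hy, z, hz, rfl⟩ := hx
      rw [Set.mem_mul] at hy
      obtain ⟨m, hm, c, hc, rfl⟩ := hy
      rw [Set.mem_singleton_iff] at hz
      subst hz
      exact ⟨c, hc, m, hm, rfl⟩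
    · rintro ⟨hxF, c, hc, m, hm, rfl⟩
      exact ⟨hxF, Set.mul_mem_mul (Set.mul_mem_mul hm hc) rfl⟩
  rw [hST, Set.ncard_coe_finset]
  -- choice function
  set f : G → G := fun x => if h : P x then h.choose else 1 with hf
  have hfC : ∀ x, P x → f x ∈ C ∧ ∃ m ∈ M, m * f x * g = x := by
    intro x hx
    have := hx.choose_spec
    simp only [hf, dif_pos hx]
    exact ⟨this.1, this.2⟩
  set C' : Finset G := T.image f with hC'
  have hA : T.card ≤ M.card * C'.card := by
    apply Finset.card_le_mul_card_image
    intro c _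
    have hsub : {a ∈ T | f a = c} ⊆ M.image (fun m => m * (c * g)) := by
      intro x hx
      rw [Finset.mem_filter] at hx
      obtain ⟨hxT, hfx⟩ := hx
      have hPx : P x := (Finset.mem_filter.1 hxT).2
      obtain ⟨_, m, hm, hmx⟩ := hfC x hPx
      rw [hfx] at hmx
      exact Finset.mem_image.2 ⟨m, hm, by rw [← hmx]; group⟩
    calc {a ∈ T | f a = c}.card ≤ (M.image (fun m => m * (c * g))).card :=
          Finset.card_le_card hsub
      _ ≤ M.card := Finset.card_image_le
  have hB : C'.card * L.card ≤ (L * M⁻¹ * F).card := by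
    have hU : C'.biUnion (fun c => L.image (fun l => l * (c * g))) ⊆ L * M⁻¹ * F := by
      intro x hx
      rw [Finset.mem_biUnion] at hx
      obtain ⟨c, hc, hx⟩ := hx
      rw [Finset.mem_image] at hx
      obtain ⟨l, hl, rfl⟩ := hx
      obtain ⟨y, hyT, hfy⟩ := Finset.mem_image.1 hc
      have hPy : P y := (Finset.mem_filter.1 hyT).2
      obtain ⟨_, m, hm, hmy⟩ := hfC y hPy
      rw [hfy] at hmy
      have : l * (c * g) = l * m⁻¹ * y := by rw [← hmy]; group
      rw [this]
      exact Finset.mul_mem_mul (Finset.mul_mem_mul hl (Finset.inv_mem_inv hm))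
        ((Finset.mem_filter.1 hyT).1)
    have hdisj : ∀ c₁ ∈ C', ∀ c₂ ∈ C', c₁ ≠ c₂ →
        Disjoint (L.image (fun l => l * (c₁ * g))) (L.image (fun l => l * (c₂ * g))) := by
      intro c₁ hc₁ c₂ hc₂ hne
      have hc₁C : c₁ ∈ C := by
        obtain ⟨y, hyT, hfy⟩ := Finset.mem_image.1 hc₁
        exact hfy ▸ (hfC y (Finset.mem_filter.1 hyT).2).1
      have hc₂C : c₂ ∈ C := by
        obtain ⟨y, hyT, hfy⟩ := Finset.mem_image.1 hc₂
        exact hfy ▸ (hfC y (Finset.mem_filter.1 hyT).2).1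
      rw [Finset.disjoint_left]
      intro x hx₁ hx₂
      obtain ⟨l₁, hl₁, he₁⟩ := Finset.mem_image.1 hx₁
      obtain ⟨l₂, hl₂, he₂⟩ := Finset.mem_image.1 hx₂
      have hl : l₁ * c₁ = l₂ * c₂ := by
        have : l₁ * (c₁ * g) = l₂ * (c₂ * g) := he₁.trans he₂.symm
        group at this ⊢
        exact mul_right_cancel this
      have : l₁ * c₁ ∈ ((L : Set G) * {c₁}) ∩ ((L : Set G) * {c₂}) := by
        constructor
        · exact Set.mul_mem_mul hl₁ rfl
        · rw [hl]; exact Set.mul_mem_mul hl₂ rfl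
      rw [hC c₁ hc₁C c₂ hc₂C hne] at this
      exact this
    calc C'.card * L.card = ∑ c ∈ C', (L.image (fun l => l * (c * g))).card := by
          rw [Finset.sum_congr rfl (fun c _ => Finset.card_image_of_injective L
            (mul_left_injective (c * g)))]
          simp [mul_comm]
      _ = (C'.biUnion (fun c => L.image (fun l => l * (c * g)))).card :=
          (Finset.card_biUnion hdisj).symm
      _ ≤ (L * M⁻¹ * F).card := Finset.card_le_card hU
  calc T.card * L.card ≤ M.card * C'.card * L.card := Nat.mul_le_mul_right _ hA
    _ = M.card * (C'.card * L.card) := by ring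
    _ ≤ M.card * (L * M⁻¹ * F).card := Nat.mul_le_mul_left _ hB


/-- Let `G` be a countable group with a Følner sequence, `M, L ⊆ G` finite
with `e ∈ M ⊆ L`, and `C ⊆ G` an `L`-separated subset. Then `D̄(MC) ≤ |M|/|L|`. -/
theorem upperBanachDensity_mul_le {G : Type*} [Group G] [Countable G] [DecidableEq G]
    (Fol : ℕ → Finset G) (hFol : IsFolnerSeq Fol)
    (M L : Finset G) (hM : (1 : G) ∈ M) (hML : M ⊆ L)
    (C : Set G) (hC : LSeparated L C) :
    upperBanachDensity Fol ((M : Set G) * C) ≤ (M.card : ℝ) / L.card := by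
  classical
  set K : Finset G := L * M⁻¹ with hK
  have hL1 : (1 : G) ∈ L := hML hM
  have hLpos : (0 : ℝ) < L.card := by exact_mod_cast Finset.card_pos.2 ⟨1, hL1⟩
  set φ : ℕ → ℝ := fun n => ((symmDiff (K * Fol n) (Fol n)).card : ℝ) / (Fol n).card with hφ
  set fseq : ℕ → ℝ := fun n =>
    ⨆ g : G, (((Fol n : Set G) ∩ ((M : Set G) * C * {g})).ncard : ℝ) / (Fol n).card with hfseq
  set h : ℕ → ℝ := fun n => ((M.card : ℝ) / L.card) * (1 + φ n) with hh
  have hFpos : ∀ n, (0 : ℝ) < (Fol n).card := fun n => by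
    exact_mod_cast Finset.card_pos.2 (hFol.1 n)
  have hfh : ∀ n, fseq n ≤ h n := by
    intro n
    apply Real.iSup_le _ ?_
    · intro g
      have hcore := core_count (Fol n) M L hML C hC g
      have hKF : ((K * Fol n).card : ℝ) ≤ (Fol n).card + (symmDiff (K * Fol n) (Fol n)).card := by
        have : K * Fol n ⊆ Fol n ∪ symmDiff (K * Fol n) (Fol n) := by
          intro x hx
          rw [Finset.mem_union]
          by_cases hxF : x ∈ Fol n
          · exact Or.inl hxF
          · exact Or.inr (Finset.mem_symmDiff.2 (Or.inl ⟨hx, hxF⟩))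
        calc ((K * Fol n).card : ℝ) ≤ ((Fol n ∪ symmDiff (K * Fol n) (Fol n)).card : ℝ) := by
              exact_mod_cast Finset.card_le_card this
          _ ≤ (Fol n).card + (symmDiff (K * Fol n) (Fol n)).card := by
              exact_mod_cast Finset.card_union_le _ _
      have hcore' : (((Fol n : Set G) ∩ ((M : Set G) * C * {g})).ncard : ℝ) * L.card ≤
          M.card * ((K * Fol n).card : ℝ) := by exact_mod_cast hcore
      rw [div_le_iff₀ (hFpos n)]
      have expand : h n * (Fol n).card =
          (M.card : ℝ) * ((Fol n).card + (symmDiff (K * Fol n) (Fol n)).card) / L.card := by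
        have hF0 : ((Fol n).card : ℝ) ≠ 0 := (hFpos n).ne'
        have hL0 : ((L.card : ℝ)) ≠ 0 := hLpos.ne'
        rw [hh, hφ]
        field_simp
      rw [expand, le_div_iff₀ hLpos]
      calc (((Fol n : Set G) ∩ ((M : Set G) * C * {g})).ncard : ℝ) * L.card ≤
            M.card * ((K * Fol n).card : ℝ) := hcore'
        _ ≤ (M.card : ℝ) * ((Fol n).card + (symmDiff (K * Fol n) (Fol n)).card) := by
            apply mul_le_mul_of_nonneg_left hKF (by positivity)
    · -- 0 ≤ h n, used for Real.iSup_le nonempty? check signature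
      positivity
  have hhtend : Filter.Tendsto h Filter.atTop (nhds ((M.card : ℝ) / L.card)) := by
    have := hFol.2 K ⟨_, (Finset.mul_mem_mul hL1 (Finset.inv_mem_inv hM) : (1 : G) * 1⁻¹ ∈ K)⟩
    have h1 : Filter.Tendsto (fun n => 1 + φ n) Filter.atTop (nhds 1) := by
      simpa using this.const_add (1 : ℝ)
    have := h1.const_mul ((M.card : ℝ) / L.card)
    simpa using this
  have hbdd : Filter.IsBoundedUnder (· ≥ ·) Filter.atTop fseq := by
    apply Filter.isBoundedUnder_of
    refine ⟨0, fun n => ?_⟩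
    apply Real.iSup_nonneg
    intro g
    positivity
  rw [upperBanachDensity]
  apply le_of_forall_pos_le_add
  intro ε hε
  apply Filter.liminf_le_of_frequently_le _ hbdd
  have hev : ∀ᶠ n in Filter.atTop, h n ≤ (M.card : ℝ) / L.card + ε :=
    hhtend.eventually (eventually_le_nhds (lt_add_of_pos_right _ hε))
  exact (hev.mono (fun n hn => le_trans (hfh n) hn)).frequently
end

section
/- Let G be a countable group, let A be a finite alphabet, and let Y ⊆ A^G be a subshift that is an SFT witnessed by a finite set K ⊆ G. Let y₁, y₂ ∈ Y and let F ⊆ G be a finite subset. If y₁ and y₂ agree on ∂_{KK⁻¹}F (i.e. y₁(g) = y₂(g) for all g ∈ ∂_{KK⁻¹}F), then the point y ∈ A^G defined by y(g) = y₁(g) for g ∈ F and y(g) = y₂(g) for g ∈ G \ F belongs to Y. -/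
/-! Membership in an SFT is tested window by window. A window `Kg` inside `F` is a window of
`y₁`. A window meeting both `F` and its complement has all its points in `F` on the
`KK⁻¹`-boundary of `F`, where `y₁ = y₂`, so it is a window of `y₂`. -/

open Pointwise

/-- The shift action of a group `G` on `G → A`: `σ^g(x)(h) = x(hg)`. -/
def shiftMap {G A : Type*} [Group G] (g : G) (x : G → A) : G → A := fun h => x (h * g)

/-- A subshift: a closed, shift-invariant subset of the full shift `A^G`. -/
def IsSubshift {G A : Type*} [Group G] [TopologicalSpace A] (X : Set (G → A)) : Prop :=
  IsClosed X ∧ ∀ g : G, shiftMap g '' X = X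

/-- `P(F, X)`: the set of patterns of shape `F` appearing in points of `X`,
i.e. the restrictions of points of `X` to `F`. -/
def patterns {G A : Type*} [Group G] (F : Finset G) (X : Set (G → A)) : Set (F → A) :=
  (fun x => fun f : F => x ↑f) '' X

/-- `Y` is an SFT witnessed by the finite set `K`: every `x ∈ A^G` all of whose `K`-patterns
are allowed in `Y` belongs to `Y`. -/
def IsSFTWitnessedBy {G A : Type*} [Group G] (Y : Set (G → A)) (K : Finset G) : Prop :=
  ∀ x : G → A, (∀ g : G, (fun k : K => shiftMap g x ↑k) ∈ patterns K Y) → x ∈ Y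

theorem IsSubshift.shiftMap_mem {G A : Type*} [Group G] [TopologicalSpace A]
    {Y : Set (G → A)} (hY : IsSubshift Y) (g : G) {y : G → A} (hy : y ∈ Y) :
    shiftMap g y ∈ Y := by
  rw [← hY.2 g]
  exact Set.mem_image_of_mem _ hy

theorem IsSFTWitnessedBy.mem_of_forall_exists_eqOn {G A : Type*} [Group G] [TopologicalSpace A]
    {Y : Set (G → A)} {K : Finset G} (hSFT : IsSFTWitnessedBy Y K) (hY : IsSubshift Y)
    {x : G → A} (hx : ∀ g : G, ∃ y ∈ Y, ∀ k ∈ K, x (k * g) = y (k * g)) : x ∈ Y := by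
  refine hSFT x fun g => ?_
  obtain ⟨y, hy, hxy⟩ := hx g
  exact ⟨shiftMap g y, hY.shiftMap_mem g hy, funext fun k => (hxy k k.2).symm⟩

theorem Finset.mul_mem_groupBoundary_mul_inv {G : Type*} [Group G] [DecidableEq G]
    {K F : Finset G} {g k k' : G} (hk : k ∈ K) (hk' : k' ∈ K) (hkF : k * g ∈ F)
    (hk'F : k' * g ∉ F) : k * g ∈ Finset.groupBoundary (K * K⁻¹) F :=
  Finset.mem_filter.2 ⟨hkF, fun h => hk'F <| by
    simpa [mul_assoc] using h (k' * k⁻¹) (Finset.mul_mem_mul hk' (Finset.inv_mem_inv hk))⟩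

theorem sft_excision_general {G A : Type*} [Group G] [DecidableEq G] [TopologicalSpace A]
    (Y : Set (G → A)) (hY : IsSubshift Y) (K : Finset G) (hSFT : IsSFTWitnessedBy Y K)
    (y₁ y₂ : G → A) (hy₁ : y₁ ∈ Y) (hy₂ : y₂ ∈ Y) (F : Finset G)
    (hagree : ∀ g ∈ Finset.groupBoundary (K * K⁻¹) F, y₁ g = y₂ g) :
    (fun g => if g ∈ F then y₁ g else y₂ g) ∈ Y := by
  refine hSFT.mem_of_forall_exists_eqOn hY fun g => ?_
  by_cases hinside : ∀ k ∈ K, k * g ∈ F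
  · exact ⟨y₁, hy₁, fun k hk => if_pos (hinside k hk)⟩
  · obtain ⟨k', hk', hk'F⟩ := not_forall₂.1 hinside
    refine ⟨y₂, hy₂, fun k hk => ?_⟩
    split_ifs with hkF
    · exact hagree _ (Finset.mul_mem_groupBoundary_mul_inv hk hk' hkF hk'F)
    · rfl

/-- If `Y` is an SFT witnessed by `K` and `y₁, y₂ ∈ Y` agree on
`∂_{KK⁻¹} F`, then the point equal to `y₁` on `F` and to `y₂` off `F` belongs to `Y`. -/
theorem sft_excision {G A : Type*} [Group G] [Countable G] [DecidableEq G]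
    [Fintype A] [Nonempty A] [TopologicalSpace A] [DiscreteTopology A]
    (Y : Set (G → A)) (hY : IsSubshift Y) (K : Finset G) (hSFT : IsSFTWitnessedBy Y K)
    (y₁ y₂ : G → A) (hy₁ : y₁ ∈ Y) (hy₂ : y₂ ∈ Y) (F : Finset G)
    (hagree : ∀ g ∈ Finset.groupBoundary (K * K⁻¹) F, y₁ g = y₂ g) :
    (fun g => if g ∈ F then y₁ g else y₂ g) ∈ Y :=
  sft_excision_general Y hY K hSFT y₁ y₂ hy₁ hy₂ F hagree
end

section
/- Let G be a countable group, let A be a finite alphabet, and let Y ⊆ A^G be a subshift that is strongly irreducible witnessed by a finite set K ⊆ G with e ∈ K. Then for any finite subset F ⊆ G and any points y₁, y₂ ∈ Y, there is a point y ∈ Y such that y(g) = y₁(g) for all g ∈ F and y(g) = y₂(g) for all g ∈ G \ KF. -/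
open Pointwise Set

/-- `Y` is strongly irreducible witnessed by the finite set `K ∋ e`: any two allowed patterns
on finite sets `F₁, F₂` with `KF₁ ∩ F₂ = ∅` appear jointly in a single point of `Y`. -/
def IsStronglyIrreducibleWitnessedBy {G A : Type*} [Group G] [DecidableEq G]
    (Y : Set (G → A)) (K : Finset G) : Prop :=
  (1 : G) ∈ K ∧
    ∀ F₁ F₂ : Finset G, Disjoint (K * F₁) F₂ →
      ∀ p₁ ∈ patterns F₁ Y, ∀ p₂ ∈ patterns F₂ Y,
        ∃ y ∈ Y, (fun f : F₁ => y ↑f) = p₁ ∧ (fun f : F₂ => y ↑f) = p₂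

/-!
Strong irreducibility glues `y₁|_F` to `y₂|_E` for every finite `E` disjoint from
`KF`. The set of points of `Y` agreeing with `y₁` on `F` and with `y₂` on `E \ KF` is closed,
nonempty and antitone in `E`, so by compactness of `A^G` these sets have a common point.
-/

section Compactness

variable {ι A : Type*} [TopologicalSpace A]

theorem isClosed_setOf_eqOn [T1Space A] (z : ι → A) (t : Set ι) :
    IsClosed {y : ι → A | EqOn y z t} := by
  simp only [EqOn, ofPred_forall]
  exact isClosed_biInter fun i _ => isClosed_singleton.preimage (continuous_apply i)

theorem IsClosed.exists_mem_eqOn_of_forall_finset [CompactSpace A] [T1Space A]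
    {Y : Set (ι → A)} (hY : IsClosed Y) (z : ι → A) (s : Set ι)
    (h : ∀ E : Finset ι, ∃ y ∈ Y, EqOn y z (↑E ∩ s)) : ∃ y ∈ Y, EqOn y z s := by
  classical
  set C : Finset ι → Set (ι → A) := fun E => Y ∩ {y | EqOn y z (↑E ∩ s)}
  have hC_anti : ∀ ⦃E₁ E₂ : Finset ι⦄, E₁ ⊆ E₂ → C E₂ ⊆ C E₁ := fun _ _ hE _ hy =>
    ⟨hy.1, hy.2.mono (inter_subset_inter_left s (Finset.coe_subset.2 hE))⟩
  have hC_closed : ∀ E, IsClosed (C E) := fun E => hY.inter (isClosed_setOf_eqOn z _)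
  obtain ⟨y, hy⟩ := IsCompact.nonempty_iInter_of_directed_nonempty_isCompact_isClosed C
    (fun E₁ E₂ => ⟨E₁ ∪ E₂, hC_anti Finset.subset_union_left, hC_anti Finset.subset_union_right⟩)
    h (fun E => (hC_closed E).isCompact) hC_closed
  rw [mem_iInter] at hy
  exact ⟨y, (hy ∅).1, fun i hi => (hy {i}).2 ⟨Finset.mem_singleton_self i, hi⟩⟩

end Compactness

theorem IsStronglyIrreducibleWitnessedBy.exists_eqOn_eqOn {G A : Type*} [Group G]
    [DecidableEq G] {Y : Set (G → A)} {K : Finset G} (hSI : IsStronglyIrreducibleWitnessedBy Y K)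
    {F₁ F₂ : Finset G} (hF : Disjoint (K * F₁) F₂) {y₁ y₂ : G → A} (hy₁ : y₁ ∈ Y)
    (hy₂ : y₂ ∈ Y) : ∃ y ∈ Y, EqOn y y₁ F₁ ∧ EqOn y y₂ F₂ := by
  obtain ⟨y, hy, h₁, h₂⟩ := hSI.2 F₁ F₂ hF _ ⟨y₁, hy₁, rfl⟩ _ ⟨y₂, hy₂, rfl⟩
  exact ⟨y, hy, fun g hg => congrFun h₁ ⟨g, hg⟩, fun g hg => congrFun h₂ ⟨g, hg⟩⟩

theorem strongly_irreducible_patch_mixing_general {G A : Type*} [Group G] [DecidableEq G]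
    [Fintype A] [TopologicalSpace A] [DiscreteTopology A]
    (Y : Set (G → A)) (hY : IsSubshift Y) (K : Finset G)
    (hSI : IsStronglyIrreducibleWitnessedBy Y K)
    (F : Finset G) (y₁ y₂ : G → A) (hy₁ : y₁ ∈ Y) (hy₂ : y₂ ∈ Y) :
    ∃ y ∈ Y, (∀ g ∈ F, y g = y₁ g) ∧ (∀ g : G, g ∉ K * F → y g = y₂ g) := by
  have hclosed : IsClosed (Y ∩ {y | EqOn y y₁ F}) := hY.1.inter (isClosed_setOf_eqOn y₁ _)
  obtain ⟨y, ⟨hyY, hyF⟩, hy⟩ := hclosed.exists_mem_eqOn_of_forall_finset y₂ (↑(K * F))ᶜ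
    fun E => by
      obtain ⟨y, hyY, hyF, hyE⟩ :=
        hSI.exists_eqOn_eqOn (Finset.disjoint_sdiff (s := K * F) (t := E)) hy₁ hy₂
      exact ⟨y, ⟨hyY, hyF⟩, by rwa [Finset.coe_sdiff] at hyE⟩
  exact ⟨y, hyY, hyF, fun g hg => hy (Finset.mem_coe.not.2 hg)⟩

/-- If `Y` is a strongly irreducible subshift witnessed by `K ∋ e`, then for
any finite `F ⊆ G` and `y₁, y₂ ∈ Y` there is `y ∈ Y` agreeing with `y₁` on `F` and with `y₂`
on `G \ KF`. -/
theorem strongly_irreducible_patch_mixing {G A : Type*} [Group G] [Countable G] [DecidableEq G]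
    [Fintype A] [Nonempty A] [TopologicalSpace A] [DiscreteTopology A]
    (Y : Set (G → A)) (hY : IsSubshift Y) (K : Finset G)
    (hSI : IsStronglyIrreducibleWitnessedBy Y K)
    (F : Finset G) (y₁ y₂ : G → A) (hy₁ : y₁ ∈ Y) (hy₂ : y₂ ∈ Y) :
    ∃ y ∈ Y, (∀ g ∈ F, y g = y₁ g) ∧ (∀ g : G, g ∉ K * F → y g = y₂ g) :=
  strongly_irreducible_patch_mixing_general Y hY K hSI F y₁ y₂ hy₁ hy₂
end

section
/- Let G be a countably infinite group with a Følner sequence (Fₙ) of nonempty finite subsets satisfying |Fₙ| → ∞, let A be a finite alphabet, and let Y₀ ⊆ Y₁ ⊆ Y be subshifts of A^G such that: Y₀ and Y are each strongly irreducible (each witnessed by some finite subset of G containing e); Y₀ simply separates elements of G, i.e. for every g ∈ G with g ≠ e there exists y ∈ Y₀ with y(g) ≠ y(e); and limsup_n (1/|Fₙ|) log|P(Fₙ,Y₁)| < liminf_n (1/|Fₙ|) log|P(Fₙ,Y)|. Then for every r ∈ ℕ there exists a finite subset M ⊆ G such that for every y₀ ∈ Y₀ there exist patterns m₁, …, m_r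 ∈ P(M,Y) \ P(M,Y₁) and points y₁, …, y_r ∈ Y satisfying, for each i ∈ {1, …, r}: (1) for every g ∈ G, (σ^g y_i)|_M = m_i if and only if g = e; (2) for every j ≠ i and every g ∈ G, (σ^g y_j)|_M ≠ m_i; and (3) y_i(g) = y₀(g) for every g ∈ G \ M. -/
open Pointwise

set_option linter.unusedVariables false

section Aux

variable {G A : Type*} [Group G] [DecidableEq G]

lemma shift_mem {X : Set (G → A)} (hX : ∀ g : G, shiftMap g '' X = X) (g : G) {x : G → A}
    (hx : x ∈ X) : shiftMap g x ∈ X := by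
  rw [← hX g]; exact ⟨x, hx, rfl⟩

lemma exists_ultralim {B : Type*} [Finite B] [Nonempty B] (U : Ultrafilter ℕ)
    (f : ℕ → B) : ∃ a : B, {n | f n = a} ∈ U := by
  by_contra h
  push_neg at h
  have h2 : ∀ a : B, {n | f n = a}ᶜ ∈ U := fun a =>
    Ultrafilter.compl_mem_iff_notMem.2 (h a)
  have h3 : (⋂ a : B, {n | f n = a}ᶜ) ∈ U := Filter.iInter_mem.2 h2
  obtain ⟨n, hn⟩ := Filter.nonempty_of_mem h3
  simp only [Set.mem_iInter, Set.mem_compl_iff, Set.mem_setOf_eq] at hn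
  exact hn (f n) rfl

/-- Infinite gluing: glue a finite pattern into a point, changing it only on `K * F`. -/
lemma glue_infinite [Countable G] [Finite A] [Nonempty A] [TopologicalSpace A]
    {Z : Set (G → A)} (hcl : IsClosed Z) {K : Finset G}
    (hSI : IsStronglyIrreducibleWitnessedBy Z K)
    (F : Finset G) (p : F → A) (hp : p ∈ patterns F Z)
    {z : G → A} (hz : z ∈ Z) :
    ∃ z', z' ∈ Z ∧ (fun f : F => z' ↑f) = p ∧ ∀ g : G, g ∉ K * F → z' g = z g := by
  classical
  obtain ⟨e, he⟩ := exists_surjective_nat G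
  set E : ℕ → Finset G := fun n => (Finset.range (n + 1)).image e with hE
  choose ys hysZ hysp hysz using fun n : ℕ =>
    hSI.2 F (E n \ (K * F)) disjoint_sdiff_self_right p hp
      (fun f : (E n \ (K * F) : Finset G) => z ↑f) ⟨z, hz, rfl⟩
  obtain ⟨U, hU⟩ : ∃ U : Ultrafilter ℕ, (U : Filter ℕ) ≤ Filter.atTop :=
    ⟨Ultrafilter.of Filter.atTop, Ultrafilter.of_le _⟩
  have hex : ∀ g : G, ∃ a : A, {n | ys n g = a} ∈ U := fun g =>
    exists_ultralim U (fun n => ys n g)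
  choose z' hz' using hex
  have hmemZ : z' ∈ Z := by
    have hcls : z' ∈ closure Z := by
      rw [mem_closure_iff]
      intro O hO hzO
      obtain ⟨I, u, hu, hsub⟩ := isOpen_pi_iff.1 hO z' hzO
      have hmem : (⋂ i ∈ I, {n | ys n i = z' i}) ∈ U :=
        (Filter.biInter_finset_mem I).2 fun i _ => hz' i
      obtain ⟨n, hn⟩ := Filter.nonempty_of_mem hmem
      simp only [Set.mem_iInter, Set.mem_setOf_eq] at hn
      refine ⟨ys n, hsub fun i hi => ?_, hysZ n⟩
      rw [hn i hi]; exact (hu i hi).2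
    rwa [hcl.closure_eq] at hcls
  refine ⟨z', hmemZ, ?_, ?_⟩
  · funext f
    obtain ⟨n, hn⟩ := Filter.nonempty_of_mem (hz' (f : G))
    have := congrFun (hysp n) f
    simp only [Set.mem_setOf_eq] at hn
    rw [← hn, this]
  · intro g hg
    obtain ⟨m, hm⟩ := he g
    have hSg : {n : ℕ | g ∈ E n} ∈ (U : Filter ℕ) := by
      apply hU
      refine Filter.mem_of_superset (Filter.Ici_mem_atTop m) ?_
      intro n hn
      show g ∈ E n
      rw [hE]
      exact Finset.mem_image.2 ⟨m, Finset.mem_range.2 (Nat.lt_succ_of_le hn), hm⟩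
    obtain ⟨n, hn1, hn2⟩ := Filter.nonempty_of_mem (Filter.inter_mem hSg (hz' g))
    simp only [Set.mem_setOf_eq] at hn1 hn2
    have hgF2 : g ∈ E n \ (K * F) := Finset.mem_sdiff.2 ⟨hn1, hg⟩
    have := congrFun (hysz n) ⟨g, hgF2⟩
    simp only at this
    rw [← hn2, this]

/-- A point of `Y₀` breaking all "periods" in `L`, supported away from `Bad`. -/
lemma exists_defect_point [Infinite G]
    {Y₀ : Set (G → A)} (hinv : ∀ g : G, shiftMap g '' Y₀ = Y₀)
    {K₀ : Finset G} (hSI : IsStronglyIrreducibleWitnessedBy Y₀ K₀)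
    (hsep : ∀ g : G, g ≠ 1 → ∃ y ∈ Y₀, y g ≠ y 1)
    (hne : Y₀.Nonempty) (Bad : Finset G) (L : Finset G) (hL : (1 : G) ∉ L) :
    ∃ (R : Finset G) (w : G → A), w ∈ Y₀ ∧ (∀ x ∈ R, x ∉ Bad) ∧
      ∀ g ∈ L, ∃ u : G, u ∈ R ∧ u * g ∈ R ∧ w u ≠ w (u * g) := by
  classical
  induction L using Finset.induction_on with
  | empty => exact ⟨∅, hne.choose, hne.choose_spec, by simp, by simp⟩
  | @insert g L hgL ih =>
    have hg1 : g ≠ 1 := by rintro rfl; exact hL (Finset.mem_insert_self 1 L)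
    obtain ⟨R, w, hwY, hRB, hdef⟩ := ih fun h => hL (Finset.mem_insert_of_mem h)
    set X : Finset G := (Bad ∪ K₀⁻¹ * R) ∪ (Bad ∪ K₀⁻¹ * R).image (· * g⁻¹) with hX
    obtain ⟨u, hu⟩ := Infinite.exists_notMem_finset X
    have huX : u ∉ Bad ∪ K₀⁻¹ * R := fun h => hu (Finset.mem_union_left _ h)
    have hugX : u * g ∉ Bad ∪ K₀⁻¹ * R := by
      intro h
      exact hu (Finset.mem_union_right _ (Finset.mem_image.2 ⟨u * g, h, by group⟩))
    have huB : u ∉ Bad := fun h => huX (Finset.mem_union_left _ h)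
    have hugB : u * g ∉ Bad := fun h => hugX (Finset.mem_union_left _ h)
    have huR : u ∉ K₀⁻¹ * R := fun h => huX (Finset.mem_union_right _ h)
    have hugR : u * g ∉ K₀⁻¹ * R := fun h => hugX (Finset.mem_union_right _ h)
    set S : Finset G := {u, u * g} with hS
    have hdisj : Disjoint (K₀ * S) R := by
      rw [Finset.disjoint_left]
      rintro a ha haR
      obtain ⟨k, hk, s, hs, rfl⟩ := Finset.mem_mul.1 ha
      have hsmem : s ∈ K₀⁻¹ * R :=
        Finset.mem_mul.2 ⟨k⁻¹, Finset.inv_mem_inv hk, k * s, haR, by group⟩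
      rcases Finset.mem_insert.1 hs with rfl | hs'
      · exact huR hsmem
      · rw [Finset.mem_singleton.1 hs'] at hsmem; exact hugR hsmem
    have hconj : u * g * u⁻¹ ≠ 1 := by
      intro h
      apply hg1
      calc g = u⁻¹ * (u * g * u⁻¹) * u := by group
      _ = 1 := by rw [h]; group
    obtain ⟨y, hyY, hyne⟩ := hsep (u * g * u⁻¹) hconj
    have hxY : shiftMap u⁻¹ y ∈ Y₀ := shift_mem hinv u⁻¹ hyY
    obtain ⟨w', hw'Y, hw'S, hw'R⟩ := hSI.2 S R hdisj _ ⟨shiftMap u⁻¹ y, hxY, rfl⟩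
      (fun f : R => w ↑f) ⟨w, hwY, rfl⟩
    have huS : u ∈ S := Finset.mem_insert_self _ _
    have hugS : u * g ∈ S := Finset.mem_insert_of_mem (Finset.mem_singleton_self _)
    have hvalu : w' u = y 1 := by
      have := congrFun hw'S ⟨u, huS⟩
      simp only [shiftMap] at this
      rw [this, mul_inv_cancel]
    have hvalug : w' (u * g) = y (u * g * u⁻¹) := by
      have := congrFun hw'S ⟨u * g, hugS⟩
      simp only [shiftMap] at this
      rw [this]
    refine ⟨insert u (insert (u * g) R), w', hw'Y, ?_, ?_⟩
    · intro x hx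
      rcases Finset.mem_insert.1 hx with rfl | hx
      · exact huB
      rcases Finset.mem_insert.1 hx with rfl | hx
      · exact hugB
      · exact hRB x hx
    · intro g' hg'
      rcases Finset.mem_insert.1 hg' with rfl | hg'L
      · refine ⟨u, Finset.mem_insert_self _ _,
          Finset.mem_insert_of_mem (Finset.mem_insert_self _ _), ?_⟩
        rw [hvalu, hvalug]
        exact fun h => hyne h.symm
      · obtain ⟨u', hu'R, hu'gR, hu'ne⟩ := hdef g' hg'L
        refine ⟨u', Finset.mem_insert_of_mem (Finset.mem_insert_of_mem hu'R),
          Finset.mem_insert_of_mem (Finset.mem_insert_of_mem hu'gR), ?_⟩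
        have h1 := congrFun hw'R ⟨u', hu'R⟩
        have h2 := congrFun hw'R ⟨u' * g', hu'gR⟩
        simp only at h1 h2
        rw [h1, h2]
        exact hu'ne

end Aux

section Counting

variable {G A : Type*} [Group G] [DecidableEq G] [Fintype A] [Nonempty A]

lemma patterns_finite (F : Finset G) (X : Set (G → A)) : (patterns F X).Finite :=
  Set.toFinite _

lemma exists_core
    (Fol : ℕ → Finset G) (hne : ∀ n, (Fol n).Nonempty)
    (hFolCard : Filter.Tendsto (fun n => (Fol n).card) Filter.atTop Filter.atTop)
    {Y₁ Y : Set (G → A)} (h1Y : Y₁ ⊆ Y) (hY₁ne : Y₁.Nonempty)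
    (hgap :
      Filter.limsup
          (fun n => Real.log ((patterns (Fol n) Y₁).ncard) / (Fol n).card) Filter.atTop
        < Filter.liminf
          (fun n => Real.log ((patterns (Fol n) Y).ncard) / (Fol n).card) Filter.atTop)
    (r : ℕ) :
    ∃ (D : Finset G) (c : Fin r → (D → A)), Function.Injective c ∧
      ∀ i, c i ∈ patterns D Y \ patterns D Y₁ := by
  classical
  set a := Filter.limsup
    (fun n => Real.log ((patterns (Fol n) Y₁).ncard) / (Fol n).card) Filter.atTop with ha
  set b := Filter.liminf
    (fun n => Real.log ((patterns (Fol n) Y).ncard) / (Fol n).card) Filter.atTop with hb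
  set x₁ := a + (b - a) / 3 with hx₁def
  set x₂ := b - (b - a) / 3 with hx₂def
  have hax₁ : a < x₁ := by rw [hx₁def]; linarith
  have hx₁₂ : x₁ < x₂ := by rw [hx₁def, hx₂def]; linarith
  have hx₂b : x₂ < b := by rw [hx₂def]; linarith
  have hkpos : ∀ n, (0 : ℝ) < (Fol n).card := fun n => by
    exact_mod_cast Finset.card_pos.2 (hne n)
  have hYne : Y.Nonempty := hY₁ne.mono h1Y
  have h1le : ∀ n, 1 ≤ (patterns (Fol n) Y₁).ncard := fun n =>
    (Set.ncard_pos (Set.toFinite _)).2 (hY₁ne.image _)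
  have h1leY : ∀ n, 1 ≤ (patterns (Fol n) Y).ncard := fun n =>
    (Set.ncard_pos (Set.toFinite _)).2 (hYne.image _)
  have hub : ∀ n, (patterns (Fol n) Y₁).ncard ≤ Fintype.card A ^ (Fol n).card := by
    intro n
    calc (patterns (Fol n) Y₁).ncard
        ≤ (Set.univ : Set (↥(Fol n) → A)).ncard :=
          Set.ncard_le_ncard (Set.subset_univ _) Set.finite_univ
      _ = Fintype.card A ^ (Fol n).card := by
          rw [Set.ncard_univ, Nat.card_eq_fintype_card, Fintype.card_fun, Fintype.card_coe]
  have hbddA : Filter.IsBoundedUnder (· ≤ ·) Filter.atTop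
      (fun n => Real.log ((patterns (Fol n) Y₁).ncard) / (Fol n).card) := by
    refine Filter.isBoundedUnder_of ⟨Real.log (Fintype.card A), fun n => ?_⟩
    have hppos : (0 : ℝ) < ((patterns (Fol n) Y₁).ncard : ℝ) := by
      exact_mod_cast h1le n
    have h1 : Real.log ((patterns (Fol n) Y₁).ncard)
        ≤ Real.log ((Fintype.card A : ℝ) ^ (Fol n).card) := by
      rw [Real.log_le_log_iff hppos (by positivity)]
      · exact_mod_cast hub n
    rw [Real.log_pow] at h1
    rw [div_le_iff₀ (hkpos n)]
    calc Real.log ((patterns (Fol n) Y₁).ncard)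
        ≤ ((Fol n).card : ℝ) * Real.log (Fintype.card A) := h1
      _ = Real.log (Fintype.card A) * ((Fol n).card : ℝ) := mul_comm _ _
  have hbddB : Filter.IsBoundedUnder (· ≥ ·) Filter.atTop
      (fun n => Real.log ((patterns (Fol n) Y).ncard) / (Fol n).card) := by
    refine Filter.isBoundedUnder_of ⟨0, fun n => ?_⟩
    exact div_nonneg (Real.log_nonneg (by exact_mod_cast h1leY n)) (hkpos n).le
  have ev1 := Filter.eventually_lt_of_limsup_lt hax₁ hbddA
  have ev2 := Filter.eventually_lt_of_lt_liminf hx₂b hbddB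
  set N : ℕ := ⌈Real.log (r + 1) / (x₂ - x₁)⌉₊ with hN
  have ev3 := hFolCard.eventually_ge_atTop N
  obtain ⟨n, hn⟩ := ((ev1.and ev2).and ev3).exists
  obtain ⟨⟨h1, h2⟩, h3⟩ := hn
  set D := Fol n with hD
  set p₁ := (patterns D Y₁).ncard with hp₁
  set p := (patterns D Y).ncard with hp
  have hp₁pos : (0 : ℝ) < (p₁ : ℝ) := by exact_mod_cast h1le n
  have hppos : (0 : ℝ) < (p : ℝ) := by exact_mod_cast h1leY n
  have hlog1 : Real.log p₁ < x₁ * (D.card : ℝ) := (div_lt_iff₀ (hkpos n)).1 h1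
  have hlog2 : x₂ * (D.card : ℝ) < Real.log p := (lt_div_iff₀ (hkpos n)).1 h2
  have hNk : Real.log (r + 1) ≤ (x₂ - x₁) * (D.card : ℝ) := by
    have hceil : Real.log (r + 1) / (x₂ - x₁) ≤ (N : ℝ) := Nat.le_ceil _
    have hNle : (N : ℝ) ≤ (D.card : ℝ) := by exact_mod_cast h3
    have := (div_le_iff₀ (by linarith : (0:ℝ) < x₂ - x₁)).1 (hceil.trans hNle)
    linarith
  have key : Real.log ((p₁ : ℝ) * (r + 1)) < Real.log p := by
    rw [Real.log_mul (ne_of_gt hp₁pos) (by positivity)]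
    have : Real.log ((r : ℝ) + 1) ≤ (x₂ - x₁) * (D.card : ℝ) := by exact_mod_cast hNk
    linarith
  have hlt : (p₁ : ℝ) * ((r : ℝ) + 1) < (p : ℝ) :=
    (Real.log_lt_log_iff (by positivity) hppos).1 key
  have hltn : p₁ * (r + 1) < p := by exact_mod_cast hlt
  have hsub : patterns D Y₁ ⊆ patterns D Y := Set.image_mono h1Y
  have hdiff : r ≤ (patterns D Y \ patterns D Y₁).ncard := by
    rw [Set.ncard_diff hsub (Set.toFinite _)]
    have hr : r ≤ p₁ * r := Nat.le_mul_of_pos_left r (h1le n)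
    have : p₁ + r < p := by
      calc p₁ + r ≤ p₁ + p₁ * r := Nat.add_le_add_left hr _
        _ = p₁ * (r + 1) := by ring
        _ < p := hltn
    omega
  have hfinD : (patterns D Y \ patterns D Y₁).Finite := Set.toFinite _
  rw [Set.ncard_eq_toFinset_card _ hfinD] at hdiff
  obtain ⟨t, hts, htcard⟩ := Finset.exists_subset_card_eq hdiff
  let eqv := Finset.equivFinOfCardEq htcard
  refine ⟨D, fun i => ↑(eqv.symm i), ?_, ?_⟩
  · intro i j hij
    have : eqv.symm i = eqv.symm j := Subtype.ext hij
    exact eqv.symm.injective this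
  · intro i
    have := (eqv.symm i).2
    have := hts this
    rwa [Set.Finite.mem_toFinset] at this

end Counting

/-- (Marker patterns.) Let `Y₀ ⊆ Y₁ ⊆ Y` be subshifts with `Y₀`, `Y`
strongly irreducible, `Y₀` simply separating elements of `G`, and an entropy gap between `Y₁`
and `Y`. Then for every `r` there is a finite shape `M ⊆ G` such that for every `y₀ ∈ Y₀`
there are patterns `m₁, …, m_r ∈ P(M,Y) \ P(M,Y₁)` and points `y₁, …, y_r ∈ Y` such that
`m_i` appears in `y_i` only at `e`, `m_i` does not appear in `y_j` for `j ≠ i`, and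
`y_i` agrees with `y₀` off `M`. -/
theorem marker_patterns {G A : Type*} [Group G] [Countable G] [Infinite G] [DecidableEq G]
    [Fintype A] [Nonempty A] [TopologicalSpace A] [DiscreteTopology A]
    (Fol : ℕ → Finset G) (hFol : IsFolnerSeq Fol)
    (hFolCard : Filter.Tendsto (fun n => (Fol n).card) Filter.atTop Filter.atTop)
    (Y₀ Y₁ Y : Set (G → A)) (h01 : Y₀ ⊆ Y₁) (h1Y : Y₁ ⊆ Y)
    (hY₀ : IsSubshift Y₀) (hY₁ : IsSubshift Y₁) (hY : IsSubshift Y)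
    (hSI₀ : ∃ K : Finset G, IsStronglyIrreducibleWitnessedBy Y₀ K)
    (hSIY : ∃ K : Finset G, IsStronglyIrreducibleWitnessedBy Y K)
    (hsep : ∀ g : G, g ≠ 1 → ∃ y ∈ Y₀, y g ≠ y 1)
    (hgap :
      Filter.limsup
          (fun n => Real.log ((patterns (Fol n) Y₁).ncard) / (Fol n).card) Filter.atTop
        < Filter.liminf
          (fun n => Real.log ((patterns (Fol n) Y).ncard) / (Fol n).card) Filter.atTop) :
    ∀ r : ℕ, ∃ M : Finset G, ∀ y₀ ∈ Y₀,
      ∃ (m : Fin r → (M → A)) (y : Fin r → (G → A)),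
        (∀ i, m i ∈ patterns M Y \ patterns M Y₁) ∧
        (∀ i, y i ∈ Y) ∧
        (∀ i, ∀ g : G, ((fun f : M => shiftMap g (y i) ↑f) = m i ↔ g = 1)) ∧
        (∀ i j, j ≠ i → ∀ g : G, (fun f : M => shiftMap g (y j) ↑f) ≠ m i) ∧
        (∀ i, ∀ g : G, g ∉ M → y i g = y₀ g) := by
  intro r
  classical
  obtain ⟨K, hK⟩ := hSIY
  obtain ⟨K₀, hK₀⟩ := hSI₀
  obtain ⟨g₀, hg₀⟩ := exists_ne (1 : G)
  obtain ⟨ystar, hystar, -⟩ := hsep g₀ hg₀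
  have hY₀ne : Y₀.Nonempty := ⟨ystar, hystar⟩
  have hY₁ne : Y₁.Nonempty := hY₀ne.mono h01
  obtain ⟨D, c, hcinj, hc⟩ := exists_core Fol hFol.1 hFolCard h1Y hY₁ne hgap r
  set T : Finset G := Finset.image₂ (fun d z => d⁻¹ * z) D (K * D) with hT
  have h1T : (1 : G) ∉ T.erase 1 := Finset.notMem_erase _ _
  obtain ⟨R, w, hwY₀, hRB, hdef⟩ :=
    exists_defect_point hY₀.2 hK₀ hsep hY₀ne (K * D) (T.erase 1) h1T
  refine ⟨K * D ∪ K₀ * R, ?_⟩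
  intro y₀ hy₀
  set M : Finset G := K * D ∪ K₀ * R with hM
  obtain ⟨v, hvY₀, hvR, hvoff⟩ :=
    glue_infinite hY₀.1 hK₀ R (fun f : R => w ↑f) ⟨w, hwY₀, rfl⟩ hy₀
  have hvY : v ∈ Y := h1Y (h01 hvY₀)
  choose ys hysY hysD hysoff using fun i : Fin r =>
    glue_infinite hY.1 hK D (c i) (hc i).1 hvY
  have hDM : ∀ d ∈ D, d ∈ M := fun d hd => Finset.mem_union_left _ (by
    have h : (1 : G) * d ∈ K * D := Finset.mul_mem_mul hK.1 hd
    rwa [one_mul] at h)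
  have hRM : ∀ u ∈ R, u ∈ M := fun u hu => Finset.mem_union_right _ (by
    have h : (1 : G) * u ∈ K₀ * R := Finset.mul_mem_mul hK₀.1 hu
    rwa [one_mul] at h)
  have hMoff : ∀ i : Fin r, ∀ g : G, g ∉ M → ys i g = y₀ g := by
    intro i g hg
    have hg1 : g ∉ K * D := fun h => hg (Finset.mem_union_left _ h)
    have hg2 : g ∉ K₀ * R := fun h => hg (Finset.mem_union_right _ h)
    rw [hysoff i g hg1, hvoff g hg2]
  have key : ∀ (i j : Fin r) (g : G),
      (fun f : M => ys j (↑f * g)) = (fun f : M => ys i ↑f) → g = 1 := by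
    intro i j g hocc
    by_contra hg1
    by_cases hgT : g ∈ T
    · obtain ⟨u, huR, hugR, hwne⟩ := hdef g (Finset.mem_erase.2 ⟨hg1, hgT⟩)
      have huKD : u ∉ K * D := hRB u huR
      have hugKD : u * g ∉ K * D := hRB _ hugR
      have e1 : ys j (u * g) = ys i u := congrFun hocc ⟨u, hRM u huR⟩
      have e2 : ys i u = v u := hysoff i u huKD
      have e3 : v u = w u := congrFun hvR ⟨u, huR⟩
      have e4 : ys j (u * g) = v (u * g) := hysoff j _ hugKD
      have e5 : v (u * g) = w (u * g) := congrFun hvR ⟨u * g, hugR⟩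
      exact hwne (by rw [← e3, ← e2, ← e1, e4, e5])
    · have hdg : ∀ d ∈ D, d * g ∉ K * D := by
        intro d hd hmem
        exact hgT (Finset.mem_image₂.2 ⟨d, hd, d * g, hmem, by group⟩)
      have hciY₁ : c i ∈ patterns D Y₁ := by
        refine ⟨shiftMap g v, h01 (shift_mem hY₀.2 g hvY₀), ?_⟩
        funext d
        have e1 : ys j (↑d * g) = ys i ↑d := congrFun hocc ⟨↑d, hDM ↑d d.2⟩
        have e2 : ys j (↑d * g) = v (↑d * g) := hysoff j _ (hdg ↑d d.2)
        have e3 : ys i ↑d = c i d := congrFun (hysD i) d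
        show v (↑d * g) = c i d
        rw [← e2, e1, e3]
      exact (hc i).2 hciY₁
  refine ⟨fun i => fun f : M => ys i ↑f, ys, ?_, hysY, ?_, ?_, hMoff⟩
  · intro i
    constructor
    · exact ⟨ys i, hysY i, rfl⟩
    · rintro ⟨z, hzY₁, hzm⟩
      apply (hc i).2
      refine ⟨z, hzY₁, ?_⟩
      funext d
      have e1 : z ↑d = ys i ↑d := congrFun hzm ⟨↑d, hDM ↑d d.2⟩
      show z ↑d = c i d
      rw [e1]
      exact congrFun (hysD i) d
  · intro i g
    constructor
    · intro h
      exact key i i g h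
    · rintro rfl
      funext f
      show ys i (↑f * 1) = ys i ↑f
      rw [mul_one]
  · intro i j hji g hocc
    have hg1 : g = 1 := key i j g hocc
    subst hg1
    apply hji
    apply hcinj
    funext d
    have e1 : ys j (↑d * 1) = ys i ↑d := congrFun hocc ⟨↑d, hDM ↑d d.2⟩
    rw [mul_one] at e1
    have e2 := congrFun (hysD j) d
    have e3 := congrFun (hysD i) d
    rw [← e2, e1, e3]
end

section
/- Let G be a group, let A_X and A_Y be finite alphabets, and let X ⊆ A_X^G and Y₀ ⊆ A_Y^G be nonempty subshifts. Let K, M, L ⊆ G be finite subsets with e ∈ K, K = K⁻¹, K ⊆ M, M = M⁻¹, M⁶ ⊆ L. Let ε > 0 and hX, hY ∈ ℝ satisfy |M⁶| < ε|L| and hX + ε + 5ε·log|A_X| < hY − ε − ε(5 + 4|K|⁶)·log|A_Y|. Let S₀ ⊆ G be a nonempty finite subset satisfying: |K³| · |M⁶| · |L| · |LS₀ \ S₀| < ε|S₀|; (1/|S₀|)·log|P(S₀,X)| < hX + ε; and (1/|S₀|)·log|P(S₀,Y₀)| > hY − ε. Let C ⊆ G be an L-separated subset, and let S₁, S₂ ⊆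 G be finite subsets with S₁ ⊆ S₀ ∩ S₂, |S₀ \ S₁| < ε|S₀|, and |S₂ \ S₁| < 3ε|S₁|. Set S₁* = int_{K³}(S₁ \ M⁶C). Then |P(S₂, X)| < |P(S₁*, Y₀)|. -/
open Pointwise

attribute [local instance] Classical.propDecidable

/-- The `K`-interior of a finite subset `F` of a group: `int_K F = {f ∈ F : Kf ⊆ F}`. -/
noncomputable def Finset.groupInterior {G : Type*} [Group G] [DecidableEq G]
    (K F : Finset G) : Finset G :=
  F.filter fun f => ∀ k ∈ K, k * f ∈ F

/-!
Restricting patterns gives `|P(S₂,X)| ≤ |P(S₀,X)| · |A_X|^|S₂ \ S₁|` and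
`|P(S₀,Y₀)| ≤ |P(S₁*,Y₀)| · |A_Y|^|S₀ \ S₁*|`, so by the entropy gap it suffices that `S₁*` misses
only a `(5 + 2|K³|)ε`-fraction of `S₀`. A point `s ∈ S₁` is lost only if `K³s` leaves `S₁`, which
the Følner condition on `S₀` makes rare, or if `K³s` meets `M⁶C`. The relevant points of `C` lie
in `L³S₀` and their `L`-translates are disjoint, so there are at most `|L³S₀|/|L| ≈ |S₀|/|L|` of
them, each excluding at most `|K³||M⁶| < ε|K³||L|` points.
-/

section Patterns

variable {G A : Type*} [Group G]

lemma patterns_ncard_pos [Finite A] {X : Set (G → A)} (hX : X.Nonempty) (F : Finset G) :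
    0 < (patterns F X).ncard :=
  (Set.ncard_pos (Set.toFinite _)).2 (hX.image _)

lemma patterns_ncard_le_of_subset [Finite A] {F F' : Finset G} (h : F ⊆ F') (X : Set (G → A)) :
    (patterns F X).ncard ≤ (patterns F' X).ncard := by
  have : patterns F X = (fun (p : F' → A) (f : F) => p ⟨f, h f.2⟩) '' patterns F' X := by
    simp only [patterns, Set.image_image]
  rw [this]
  exact Set.ncard_image_le (Set.toFinite _)

variable [DecidableEq G]

lemma patterns_ncard_le_mul_pow [Fintype A] {F F' : Finset G} (h : F ⊆ F') (X : Set (G → A)) :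
    (patterns F' X).ncard ≤ (patterns F X).ncard * Fintype.card A ^ (F' \ F).card := by
  let split (p : F' → A) : (F → A) × (↥(F' \ F) → A) :=
    (fun f => p ⟨f, h f.2⟩, fun f => p ⟨f, (Finset.mem_sdiff.1 f.2).1⟩)
  calc (patterns F' X).ncard ≤ (patterns F X ×ˢ (Set.univ : Set (↥(F' \ F) → A))).ncard := by
        refine Set.ncard_le_ncard_of_injOn split ?_ ?_ (Set.toFinite _)
        · rintro _ ⟨x, hx, rfl⟩
          exact ⟨⟨x, hx, rfl⟩, trivial⟩
        · intro p _ q _ hpq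
          funext f
          by_cases hf : (f : G) ∈ F
          · exact congrFun (congrArg Prod.fst hpq) ⟨f, hf⟩
          · exact congrFun (congrArg Prod.snd hpq) ⟨f, Finset.mem_sdiff.2 ⟨f.2, hf⟩⟩
    _ = (patterns F X).ncard * Fintype.card A ^ (F' \ F).card := by
        rw [Set.ncard_prod, Set.ncard_univ, Nat.card_eq_fintype_card, Fintype.card_fun,
          Fintype.card_coe]

lemma log_patterns_ncard_le [Fintype A] {X : Set (G → A)} (hX : X.Nonempty) {F F' : Finset G}
    (h : F ⊆ F') :
    Real.log (patterns F' X).ncard ≤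
      Real.log (patterns F X).ncard + (F' \ F).card * Real.log (Fintype.card A) := by
  have hpos : (0 : ℝ) < (patterns F' X).ncard := by exact_mod_cast patterns_ncard_pos hX F'
  have hle : ((patterns F' X).ncard : ℝ) ≤
      (patterns F X).ncard * (Fintype.card A : ℝ) ^ (F' \ F).card := by
    exact_mod_cast patterns_ncard_le_mul_pow h X
  have hprod := (hpos.trans_le hle).ne'
  rw [← Real.log_pow, ← Real.log_mul (left_ne_zero_of_mul hprod) (right_ne_zero_of_mul hprod)]
  exact Real.log_le_log hpos hle

end Patterns

namespace Finset

variable {G : Type*} [Group G] [DecidableEq G]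

lemma sdiff_groupInterior_subset {K S T : Finset G} (hK : (1 : G) ∈ K) :
    S \ K.groupInterior T ⊆ K⁻¹ * ((K * S) \ T) := by
  intro s hs
  obtain ⟨hsS, hsT⟩ := mem_sdiff.1 hs
  obtain ⟨k, hk, hks⟩ : ∃ k ∈ K, k * s ∉ T := by
    by_contra! hall
    exact hsT (mem_filter.2 ⟨by simpa using hall 1 hK, hall⟩)
  simpa using mul_mem_mul (inv_mem_inv hk) (mem_sdiff.2 ⟨mul_mem_mul hk hsS, hks⟩)

lemma card_sdiff_groupInterior_le {K S T : Finset G} (hK : (1 : G) ∈ K) :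
    (S \ K.groupInterior T).card ≤ K.card * ((K * S) \ T).card := by
  calc (S \ K.groupInterior T).card ≤ (K⁻¹ * ((K * S) \ T)).card :=
        card_le_card (sdiff_groupInterior_subset hK)
    _ ≤ K.card * ((K * S) \ T).card := card_inv K ▸ card_mul_le

lemma card_mul_sdiff_le (L A S : Finset G) :
    ((L * A) \ S).card ≤ L.card * (A \ S).card + ((L * S) \ S).card := by
  have : (L * A) \ S ⊆ L * (A \ S) ∪ ((L * S) \ S) := by
    intro x hx
    obtain ⟨hxA, hxS⟩ := mem_sdiff.1 hx
    obtain ⟨l, hl, a, ha, rfl⟩ := mem_mul.1 hxA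
    by_cases haS : a ∈ S
    · exact mem_union_right _ (mem_sdiff.2 ⟨mul_mem_mul hl haS, hxS⟩)
    · exact mem_union_left _ (mul_mem_mul hl (mem_sdiff.2 ⟨ha, haS⟩))
  calc ((L * A) \ S).card ≤ (L * (A \ S)).card + ((L * S) \ S).card :=
        (card_le_card this).trans (card_union_le _ _)
    _ ≤ L.card * (A \ S).card + ((L * S) \ S).card := Nat.add_le_add_right card_mul_le _

lemma card_mul_mul_mul_le {L : Finset G} (hL : L.Nonempty) (S : Finset G) :
    (L * (L * (L * S))).card ≤ S.card + 3 * L.card ^ 2 * ((L * S) \ S).card := by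
  have h2 := card_mul_sdiff_le L (L * S) S
  have h3 := card_mul_sdiff_le L (L * (L * S)) S
  have hl : 1 ≤ L.card := hL.card_pos
  have h1 : (L * (L * (L * S))).card ≤ ((L * (L * (L * S))) \ S).card + S.card :=
    card_le_card_sdiff_add_card
  have hle : L.card ≤ L.card ^ 2 := by nlinarith
  nlinarith [Nat.mul_le_mul_left L.card h2, Nat.mul_le_mul_right ((L * S) \ S).card hle,
    Nat.mul_le_mul_right ((L * S) \ S).card (hl.trans hle)]

lemma card_filter_mem_mul_le (N V : Finset G) (C : Set G) :
    (V.filter (· ∈ (N : Set G) * C)).card ≤ N.card * ((N⁻¹ * V).filter (· ∈ C)).card := by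
  have : V.filter (· ∈ (N : Set G) * C) ⊆ N * (N⁻¹ * V).filter (· ∈ C) := by
    intro v hv
    obtain ⟨hvV, n, hn, c, hc, rfl⟩ := mem_filter.1 hv
    refine mul_mem_mul hn (mem_filter.2 ⟨?_, hc⟩)
    simpa using mul_mem_mul (inv_mem_inv hn) hvV
  exact (card_le_card this).trans card_mul_le

end Finset

lemma LSeparated.card_filter_mul_le {G : Type*} [Group G] [DecidableEq G] {L : Finset G}
    {C : Set G} (hC : LSeparated L C) (W : Finset G) :
    (W.filter (· ∈ C)).card * L.card ≤ (L * W).card := by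
  have hdisj : ((W.filter (· ∈ C) : Finset G) : Set G).PairwiseDisjoint (fun c => L * {c}) := by
    intro c₁ h₁ c₂ h₂ hne
    rw [Function.onFun, ← Finset.disjoint_coe, Set.disjoint_iff_inter_eq_empty]
    simp only [Finset.coe_mul, Finset.coe_singleton]
    exact hC c₁ (Finset.mem_filter.1 h₁).2 c₂ (Finset.mem_filter.1 h₂).2 hne
  calc (W.filter (· ∈ C)).card * L.card = ((W.filter (· ∈ C)).biUnion fun c => L * {c}).card := by
        rw [Finset.card_biUnion hdisj, Finset.sum_congr rfl fun c _ => Finset.card_mul_singleton L c,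
          Finset.sum_const, smul_eq_mul]
    _ ≤ (L * W).card := Finset.card_le_card <| Finset.biUnion_subset.2 fun c hc =>
        Finset.mul_subset_mul_left (Finset.singleton_subset_iff.2 (Finset.mem_filter.1 hc).1)

lemma LSeparated.card_filter_mem_mul_le {G : Type*} [Group G] [DecidableEq G]
    {L N V S : Finset G} {C : Set G} (hC : LSeparated L C) (hL : L.Nonempty)
    (hV : N⁻¹ * V ⊆ L * (L * S)) :
    (V.filter (· ∈ (N : Set G) * C)).card * L.card ≤
      N.card * (S.card + 3 * L.card ^ 2 * ((L * S) \ S).card) := by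
  calc (V.filter (· ∈ (N : Set G) * C)).card * L.card
      ≤ N.card * (((N⁻¹ * V).filter (· ∈ C)).card * L.card) := by
        rw [← mul_assoc]
        exact Nat.mul_le_mul_right _ (Finset.card_filter_mem_mul_le N V C)
    _ ≤ N.card * (L * (L * (L * S))).card :=
        Nat.mul_le_mul_left _ ((hC.card_filter_mul_le _).trans
          (Finset.card_le_card (Finset.mul_subset_mul_left hV)))
    _ ≤ N.card * (S.card + 3 * L.card ^ 2 * ((L * S) \ S).card) :=
        Nat.mul_le_mul_left _ (Finset.card_mul_mul_mul_le hL S)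

open Finset in
lemma card_sdiff_groupInterior_filter_le {G : Type*} [Group G] [DecidableEq G]
    {B L S₀ S₁ : Finset G} (D : Set G) (hB1 : (1 : G) ∈ B) (hBL : B ⊆ L) (hS₁S₀ : S₁ ⊆ S₀) :
    (S₀ \ B.groupInterior (S₁.filter (· ∉ D))).card ≤ (S₀ \ S₁).card +
      B.card * (((L * S₀) \ S₀).card + (S₀ \ S₁).card + ((B * S₁).filter (· ∈ D)).card) := by
  set T := S₁.filter (· ∉ D)
  have hT : (B * S₁) \ T ⊆ ((L * S₀) \ S₀) ∪ (S₀ \ S₁) ∪ (B * S₁).filter (· ∈ D) := by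
    intro x hx
    obtain ⟨hxB, hxT⟩ := mem_sdiff.1 hx
    by_cases hxD : x ∈ D
    · exact mem_union_right _ (mem_filter.2 ⟨hxB, hxD⟩)
    by_cases hxS₀ : x ∈ S₀
    · have hxS₁ : x ∉ S₁ := fun h => hxT (mem_filter.2 ⟨h, hxD⟩)
      exact mem_union_left _ (mem_union_right _ (mem_sdiff.2 ⟨hxS₀, hxS₁⟩))
    · exact mem_union_left _ (mem_union_left _
        (mem_sdiff.2 ⟨mul_subset_mul hBL hS₁S₀ hxB, hxS₀⟩))
  have hsub : B.groupInterior T ⊆ S₁ := (filter_subset _ _).trans (filter_subset _ _)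
  rw [← sdiff_union_sdiff_cancel hS₁S₀ hsub]
  refine (card_union_le _ _).trans (Nat.add_le_add_left
    ((card_sdiff_groupInterior_le hB1).trans (Nat.mul_le_mul_left _ ?_)) _)
  exact (card_le_card hT).trans
    ((card_union_le _ _).trans (Nat.add_le_add_right (card_union_le _ _) _))

theorem card_sdiff_groupInterior_le_of_separated {G : Type*} [Group G] [DecidableEq G]
    {B N L S₀ S₁ : Finset G} {C : Set G} {ε : ℝ}
    (hB1 : (1 : G) ∈ B) (hBN : B ⊆ N) (hNsymm : N⁻¹ = N) (hNL : N ⊆ L)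
    (hNε : (N.card : ℝ) < ε * L.card)
    (hS₀inv : (B.card : ℝ) * N.card * L.card * ((L * S₀) \ S₀).card < ε * S₀.card)
    (hC : LSeparated L C) (hS₁S₀ : S₁ ⊆ S₀) (hS₀S₁ : ((S₀ \ S₁).card : ℝ) < ε * S₀.card) :
    ((S₀ \ B.groupInterior (S₁.filter fun s => s ∉ (N : Set G) * C)).card : ℝ) ≤
      (5 + 2 * B.card) * ε * S₀.card := by
  set E := (B * S₁).filter (· ∈ (N : Set G) * C)
  have hBL : B ⊆ L := hBN.trans hNL
  have hL : L.Nonempty := ⟨1, hBL hB1⟩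
  have hS : ((S₀ \ B.groupInterior (S₁.filter fun s => s ∉ (N : Set G) * C)).card : ℝ) ≤
      (S₀ \ S₁).card + B.card * (((L * S₀) \ S₀).card + (S₀ \ S₁).card + E.card) := by
    exact_mod_cast card_sdiff_groupInterior_filter_le _ hB1 hBL hS₁S₀
  have hE : (E.card : ℝ) * L.card ≤ N.card * (S₀.card + 3 * L.card ^ 2 * ((L * S₀) \ S₀).card) := by
    refine mod_cast hC.card_filter_mem_mul_le hL ?_
    rw [hNsymm]
    exact Finset.mul_subset_mul hNL (Finset.mul_subset_mul hBL hS₁S₀)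
  have hl : (0 : ℝ) < L.card := by exact_mod_cast hL.card_pos
  have hml : (1 : ℝ) ≤ N.card * L.card := by
    exact_mod_cast Nat.one_le_iff_ne_zero.2 (Nat.mul_ne_zero
      (Finset.card_ne_zero_of_mem (hBN hB1)) (Finset.card_ne_zero_of_mem (hBL hB1)))
  have hκ : (0 : ℝ) ≤ B.card := Nat.cast_nonneg _
  have hBe : (B.card : ℝ) * ((L * S₀) \ S₀).card ≤ ε * S₀.card := by
    nlinarith [mul_le_mul_of_nonneg_left hml
      (by positivity : (0 : ℝ) ≤ B.card * ((L * S₀) \ S₀).card)]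
  have hBE : (B.card : ℝ) * E.card ≤ (B.card + 3) * ε * S₀.card := by
    refine le_of_mul_le_mul_right ?_ hl
    calc (B.card : ℝ) * E.card * L.card
        ≤ B.card * (N.card * (S₀.card + 3 * L.card ^ 2 * ((L * S₀) \ S₀).card)) := by
          rw [mul_assoc]
          exact mul_le_mul_of_nonneg_left hE hκ
      _ = B.card * N.card * S₀.card +
          3 * L.card * (B.card * N.card * L.card * ((L * S₀) \ S₀).card) := by ring
      _ ≤ B.card * (ε * L.card) * S₀.card + 3 * L.card * (ε * S₀.card) := by gcongr
      _ = (B.card + 3) * ε * S₀.card * L.card := by ring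
  nlinarith [mul_le_mul_of_nonneg_left hS₀S₁.le hκ]

theorem block_injection_count_general {G AX AY : Type*} [Group G] [DecidableEq G]
    [Fintype AX] [Fintype AY]
    (X : Set (G → AX)) (Y₀ : Set (G → AY))
    (hXne : X.Nonempty) (hY₀ne : Y₀.Nonempty)
    (K M L : Finset G)
    (hK1 : (1 : G) ∈ K) (hKM : K ⊆ M) (hMsymm : M⁻¹ = M)
    (hM6L : (M ^ 6 : Finset G) ⊆ L)
    (ε : ℝ) (hε : 0 < ε) (hXe hYe : ℝ)
    (hM6εL : (((M ^ 6 : Finset G)).card : ℝ) < ε * L.card)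
    (hgap : hXe + ε + 5 * ε * Real.log (Fintype.card AX)
      < hYe - ε - ε * (5 + 4 * (K.card : ℝ) ^ 6) * Real.log (Fintype.card AY))
    (S₀ : Finset G) (hS₀ne : S₀.Nonempty)
    (hS₀inv : (((K ^ 3 : Finset G)).card : ℝ) * ((M ^ 6 : Finset G)).card * L.card
        * (((L * S₀) \ S₀).card : ℝ) < ε * S₀.card)
    (hS₀X : Real.log ((patterns S₀ X).ncard) / S₀.card < hXe + ε)
    (hS₀Y : hYe - ε < Real.log ((patterns S₀ Y₀).ncard) / S₀.card)
    (C : Set G) (hC : LSeparated L C)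
    (S₁ S₂ : Finset G) (hS₁S₀ : S₁ ⊆ S₀) (hS₁S₂ : S₁ ⊆ S₂)
    (hS₀S₁ : (((S₀ \ S₁)).card : ℝ) < ε * S₀.card)
    (hS₂S₁ : (((S₂ \ S₁)).card : ℝ) < 3 * ε * S₁.card) :
    (patterns S₂ X).ncard <
      (patterns (Finset.groupInterior (K ^ 3)
        (S₁.filter fun s => s ∉ ((M ^ 6 : Finset G) : Set G) * C)) Y₀).ncard := by
  set S := Finset.groupInterior (K ^ 3) (S₁.filter fun s => s ∉ ((M ^ 6 : Finset G) : Set G) * C)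
  have hs : (0 : ℝ) < S₀.card := by exact_mod_cast hS₀ne.card_pos
  have hK3 : ((K ^ 3).card : ℝ) ≤ K.card ^ 6 := by
    exact_mod_cast Finset.card_pow_le.trans
      (Nat.pow_le_pow_right (Finset.card_pos.2 ⟨1, hK1⟩) (by norm_num))
  have hS : ((S₀ \ S).card : ℝ) ≤ (5 + 4 * (K.card : ℝ) ^ 6) * ε * S₀.card := by
    refine (card_sdiff_groupInterior_le_of_separated (Finset.one_mem_pow hK1)
      (Finset.pow_subset_pow hKM (hKM hK1) (by norm_num)) (by rw [← inv_pow, hMsymm]) hM6L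
      hM6εL hS₀inv hC hS₁S₀ hS₀S₁).trans ?_
    gcongr
    linarith
  have hX : Real.log (patterns S₂ X).ncard ≤
      Real.log (patterns S₀ X).ncard + 3 * ε * S₀.card * Real.log (Fintype.card AX) := by
    calc Real.log (patterns S₂ X).ncard
        ≤ Real.log (patterns S₁ X).ncard + (S₂ \ S₁).card * Real.log (Fintype.card AX) :=
          log_patterns_ncard_le hXne hS₁S₂
      _ ≤ _ := by
          gcongr
          · exact_mod_cast patterns_ncard_pos hXne S₁
          · exact patterns_ncard_le_of_subset hS₁S₀ X
          · exact hS₂S₁.le.trans (by gcongr)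
  have hY : Real.log (patterns S₀ Y₀).ncard ≤ Real.log (patterns S Y₀).ncard
      + (5 + 4 * (K.card : ℝ) ^ 6) * ε * S₀.card * Real.log (Fintype.card AY) := by
    have hSS₀ : S ⊆ S₀ := (Finset.filter_subset _ _).trans ((Finset.filter_subset _ _).trans hS₁S₀)
    refine (log_patterns_ncard_le hY₀ne hSS₀).trans ?_
    gcongr
  rw [div_lt_iff₀ hs] at hS₀X
  rw [lt_div_iff₀ hs] at hS₀Y
  have hlog : Real.log (patterns S₂ X).ncard < Real.log (patterns S Y₀).ncard := by
    linarith [mul_lt_mul_of_pos_left hgap hs,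
      mul_nonneg (mul_nonneg hε.le hs.le) (Real.log_natCast_nonneg (Fintype.card AX))]
  exact_mod_cast (Real.log_lt_log_iff (by exact_mod_cast patterns_ncard_pos hXne S₂)
    (by exact_mod_cast patterns_ncard_pos hY₀ne S)).1 hlog

/-- (Block injection counting lemma.) Under the stated invariance and
entropy-counting conditions on the shapes `S₀ ⊇ S₁ ⊆ S₂` and the `L`-separated set `C`,
setting `S₁* = int_{K³}(S₁ \ M⁶C)`, one has `|P(S₂, X)| < |P(S₁*, Y₀)|`. -/
theorem block_injection_count {G AX AY : Type*} [Group G] [DecidableEq G]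
    [Fintype AX] [Nonempty AX] [TopologicalSpace AX] [DiscreteTopology AX]
    [Fintype AY] [Nonempty AY] [TopologicalSpace AY] [DiscreteTopology AY]
    (X : Set (G → AX)) (Y₀ : Set (G → AY))
    (hXsub : IsSubshift X) (hY₀sub : IsSubshift Y₀) (hXne : X.Nonempty) (hY₀ne : Y₀.Nonempty)
    (K M L : Finset G)
    (hK1 : (1 : G) ∈ K) (hKsymm : K⁻¹ = K) (hKM : K ⊆ M) (hMsymm : M⁻¹ = M)
    (hM6L : (M ^ 6 : Finset G) ⊆ L)
    (ε : ℝ) (hε : 0 < ε) (hXe hYe : ℝ)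
    (hM6εL : (((M ^ 6 : Finset G)).card : ℝ) < ε * L.card)
    (hgap : hXe + ε + 5 * ε * Real.log (Fintype.card AX)
      < hYe - ε - ε * (5 + 4 * (K.card : ℝ) ^ 6) * Real.log (Fintype.card AY))
    (S₀ : Finset G) (hS₀ne : S₀.Nonempty)
    (hS₀inv : (((K ^ 3 : Finset G)).card : ℝ) * ((M ^ 6 : Finset G)).card * L.card
        * (((L * S₀) \ S₀).card : ℝ) < ε * S₀.card)
    (hS₀X : Real.log ((patterns S₀ X).ncard) / S₀.card < hXe + ε)
    (hS₀Y : hYe - ε < Real.log ((patterns S₀ Y₀).ncard) / S₀.card)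
    (C : Set G) (hC : LSeparated L C)
    (S₁ S₂ : Finset G) (hS₁S₀ : S₁ ⊆ S₀) (hS₁S₂ : S₁ ⊆ S₂)
    (hS₀S₁ : (((S₀ \ S₁)).card : ℝ) < ε * S₀.card)
    (hS₂S₁ : (((S₂ \ S₁)).card : ℝ) < 3 * ε * S₁.card) :
    (patterns S₂ X).ncard <
      (patterns (Finset.groupInterior (K ^ 3)
        (S₁.filter fun s => s ∉ ((M ^ 6 : Finset G) : Set G) * C)) Y₀).ncard :=
  block_injection_count_general X Y₀ hXne hY₀ne K M L hK1 hKM hMsymm hM6L ε hε hXe hYe hM6εL hgap S₀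
    hS₀ne hS₀inv hS₀X hS₀Y C hC S₁ S₂ hS₁S₀ hS₁S₂ hS₀S₁ hS₂S₁
end
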